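/- Let Θ ⊆ ℝᵐ be compact, G : Θ → ℝⁿ continuous, p ≥ 1, and let F : ℝⁿ → Θ be a measurable map satisfying ‖G(F(y)) − y‖ ≤ ‖G(x) − y‖ for every x ∈ Θ and y ∈ ℝⁿ (so G(F(y)) is a nearest point of the range of G to y). Let ρ_y be a probability measure on ℝⁿ. Then: (i) for every probability measure ρ on Θ and every coupling π ∈ Γ(G_#ρ, ρ_y), ∫ ‖u − v‖^p dπ(u,v) ≥ ∫ ‖G(F(y)) − y‖^p dρ_y(y); and (ii) the measure ((G∘F) × id)_# ρ_y is a coupling of G_#(F_# ρ_y) and ρ_y whose cost ∫ ‖u − v‖^p equals ∫ ‖G(F(y)) − y‖^p dρ_y(y). Consequently ρ_x* = F_# ρ_y minimizes the p-Wasserstein distance W_p(G_#ρ, ρ_y) over probability measures ρ on Θ. -/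

import Mathlib

open MeasureTheory Real

/-- `cpl` is a coupling of `μ` and `ν`: a measure on the product whose marginals
are `μ` and `ν`. -/
def IsCoupling {X Y : Type*} [MeasurableSpace X] [MeasurableSpace Y]
    (μ : Measure X) (ν : Measure Y) (cpl : Measure (X × Y)) : Prop :=
  cpl.map Prod.fst = μ ∧ cpl.map Prod.snd = ν

/-- Let `Θ ⊆ ℝᵐ` be compact, `G` continuous, `p ≥ 1`, and `F` a
measurable selection of nearest points: `‖G (F y) - y‖ ≤ ‖G x - y‖` for all `x ∈ Θ`, `y`.
Then (i) for every probability measure `ρ` on `Θ` and coupling `cpl ∈ Γ(G_#ρ, ρy)`,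
`∫‖u - v‖^p dcpl ≥ ∫‖G(F y) - y‖^p dρy`; (ii) `((G∘F) × id)_# ρy` is a coupling of
`G_#(F_#ρy)` and `ρy` with cost `∫‖G(F y) - y‖^p dρy`. Consequently `F_#ρy` minimizes
the `p`-Wasserstein cost to `ρy` among pushforwards. -/
theorem stmt_2 {m n : ℕ} (Θ : Set (EuclideanSpace ℝ (Fin m))) (hΘ : IsCompact Θ)
    (G : EuclideanSpace ℝ (Fin m) → EuclideanSpace ℝ (Fin n)) (hG : Continuous G)
    (p : ℝ) (hp : 1 ≤ p)
    (F : EuclideanSpace ℝ (Fin n) → EuclideanSpace ℝ (Fin m))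
    (hF : Measurable F) (hFΘ : ∀ y, F y ∈ Θ)
    (hnearest : ∀ x ∈ Θ, ∀ y, ‖G (F y) - y‖ ≤ ‖G x - y‖)
    (ρy : Measure (EuclideanSpace ℝ (Fin n))) [IsProbabilityMeasure ρy] :
    (∀ ρ : Measure (EuclideanSpace ℝ (Fin m)), IsProbabilityMeasure ρ → ρ Θᶜ = 0 →
      ∀ cpl : Measure (EuclideanSpace ℝ (Fin n) × EuclideanSpace ℝ (Fin n)),
        IsCoupling (ρ.map G) ρy cpl →
        ∫⁻ y, ENNReal.ofReal (‖G (F y) - y‖ ^ p) ∂ρy ≤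
          ∫⁻ z, ENNReal.ofReal (‖z.1 - z.2‖ ^ p) ∂cpl) ∧
    (IsCoupling ((ρy.map F).map G) ρy (ρy.map (fun y => (G (F y), y))) ∧
      ∫⁻ z, ENNReal.ofReal (‖z.1 - z.2‖ ^ p) ∂(ρy.map (fun y => (G (F y), y))) =
        ∫⁻ y, ENNReal.ofReal (‖G (F y) - y‖ ^ p) ∂ρy) ∧
    (∀ ρ : Measure (EuclideanSpace ℝ (Fin m)), IsProbabilityMeasure ρ → ρ Θᶜ = 0 →
      (⨅ (cpl : Measure (EuclideanSpace ℝ (Fin n) × EuclideanSpace ℝ (Fin n)))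
          (_ : IsCoupling ((ρy.map F).map G) ρy cpl),
          ∫⁻ z, ENNReal.ofReal (‖z.1 - z.2‖ ^ p) ∂cpl) ≤
        ⨅ (cpl : Measure (EuclideanSpace ℝ (Fin n) × EuclideanSpace ℝ (Fin n)))
          (_ : IsCoupling (ρ.map G) ρy cpl),
          ∫⁻ z, ENNReal.ofReal (‖z.1 - z.2‖ ^ p) ∂cpl) := by

  have hGF : Measurable (G ∘ F) := hG.measurable.comp hF
  have hf : Measurable fun y : EuclideanSpace ℝ (Fin n) =>
      ENNReal.ofReal (‖G (F y) - y‖ ^ p) :=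
    (ENNReal.measurable_ofReal.comp ((Real.continuous_rpow_const (by linarith : (0:ℝ) ≤ p)).measurable.comp ((hGF.sub measurable_id).norm)))
  have hcost : Measurable fun z : EuclideanSpace ℝ (Fin n) × EuclideanSpace ℝ (Fin n) =>
      ENNReal.ofReal (‖z.1 - z.2‖ ^ p) :=
    (ENNReal.measurable_ofReal.comp ((Real.continuous_rpow_const (by linarith : (0:ℝ) ≤ p)).measurable.comp ((measurable_fst.sub measurable_snd).norm)))
  have key : ∀ ρ : Measure (EuclideanSpace ℝ (Fin m)), IsProbabilityMeasure ρ → ρ Θᶜ = 0 →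
      ∀ cpl : Measure (EuclideanSpace ℝ (Fin n) × EuclideanSpace ℝ (Fin n)),
        IsCoupling (ρ.map G) ρy cpl →
        ∫⁻ y, ENNReal.ofReal (‖G (F y) - y‖ ^ p) ∂ρy ≤
          ∫⁻ z, ENNReal.ofReal (‖z.1 - z.2‖ ^ p) ∂cpl := by
    intro ρ hρ hρΘ cpl hcpl
    have hS : MeasurableSet (G '' Θ) := (hΘ.image hG).isClosed.measurableSet
    have hae : ∀ᵐ z ∂cpl, z.1 ∈ G '' Θ := by
      rw [ae_iff]
      have h1 : {z : EuclideanSpace ℝ (Fin n) × EuclideanSpace ℝ (Fin n) |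
          ¬ z.1 ∈ G '' Θ} = Prod.fst ⁻¹' (G '' Θ)ᶜ := rfl
      rw [h1, ← Measure.map_apply measurable_fst hS.compl, hcpl.1,
        Measure.map_apply hG.measurable hS.compl]
      refine le_antisymm (le_trans (measure_mono ?_) hρΘ.le) zero_le
      intro x hx
      simp only [Set.mem_preimage, Set.mem_compl_iff] at hx ⊢
      exact fun hxΘ => hx ⟨x, hxΘ, rfl⟩
    calc ∫⁻ y, ENNReal.ofReal (‖G (F y) - y‖ ^ p) ∂ρy
        = ∫⁻ z, ENNReal.ofReal (‖G (F z.2) - z.2‖ ^ p) ∂cpl := by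
          rw [← hcpl.2, lintegral_map hf measurable_snd]
      _ ≤ ∫⁻ z, ENNReal.ofReal (‖z.1 - z.2‖ ^ p) ∂cpl := by
          refine lintegral_mono_ae (hae.mono ?_)
          rintro z ⟨x, hxΘ, hx⟩
          refine ENNReal.ofReal_le_ofReal ?_
          refine Real.rpow_le_rpow (norm_nonneg _) ?_ (by linarith)
          rw [← hx]; exact hnearest x hxΘ z.2
  have hGFy : Measurable fun y : EuclideanSpace ℝ (Fin n) => (G (F y), y) :=
    hGF.prodMk measurable_id
  have hcpl2 : IsCoupling ((ρy.map F).map G) ρy (ρy.map (fun y => (G (F y), y))) := by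
    constructor
    · rw [Measure.map_map measurable_fst hGFy, Measure.map_map hG.measurable hF]
      rfl
    · rw [Measure.map_map measurable_snd hGFy]
      exact Measure.map_id
  have hcost2 : ∫⁻ z, ENNReal.ofReal (‖z.1 - z.2‖ ^ p) ∂(ρy.map (fun y => (G (F y), y))) =
      ∫⁻ y, ENNReal.ofReal (‖G (F y) - y‖ ^ p) ∂ρy := by
    rw [lintegral_map hcost hGFy]
  refine ⟨key, ⟨hcpl2, hcost2⟩, ?_⟩
  intro ρ hρ hρΘ
  refine le_iInf fun cpl => le_iInf fun hcpl => ?_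
  calc (⨅ (cpl : Measure (EuclideanSpace ℝ (Fin n) × EuclideanSpace ℝ (Fin n)))
          (_ : IsCoupling ((ρy.map F).map G) ρy cpl),
          ∫⁻ z, ENNReal.ofReal (‖z.1 - z.2‖ ^ p) ∂cpl)
      ≤ ∫⁻ z, ENNReal.ofReal (‖z.1 - z.2‖ ^ p) ∂(ρy.map (fun y => (G (F y), y))) :=
        iInf₂_le _ hcpl2
    _ = ∫⁻ y, ENNReal.ofReal (‖G (F y) - y‖ ^ p) ∂ρy := hcost2
    _ ≤ ∫⁻ z, ENNReal.ofReal (‖z.1 - z.2‖ ^ p) ∂cpl := key ρ hρ hρΘ cpl hcpl
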